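/- For all 1 ≤ r, s ≤ p, all 1 ≤ i, j ≤ m, all 1 ≤ a, b ≤ d', and all integers k, l ≥ 0, the commutator in End_ℂ(P) satisfies ⁅H_a(r,j;k), K_b(i,s;l)⁆ = δ_{a,b}·( δ_{i,j}·F_a(r,s;k+l) − δ_{r,s}·G_a(i,j;k+l) ). (This is identity (ovphi-e2) verified in the proof of Proposition 4.2 of the paper, corresponding to the Takiff relation [E^r_{p+q+j} ⊗ t̄_{w_a}^k, E^{p+q+i}_s ⊗ t̄_{w_b}^l] = δ_{a,b}( δ_{i,j} E^r_s ⊗ t̄_{w_a}^{k+l} − δ_{r,s} E^{p+q+i}_{p+q+j} ⊗ t̄_{w_a}^{k+l} ), in the purely even case 1 ≤ r,s ≤ p, 1 ≤ i,j ≤ m.) -/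

import Mathlib

open MvPolynomial

/-- Multiplication by the variable `v`, as a `ℂ`-linear endomorphism of the
polynomial ring. -/
noncomputable def mulOp {σ : Type*} (v : σ) :
    Module.End ℂ (MvPolynomial σ ℂ) :=
  LinearMap.mulLeft ℂ (X v)

/-- The partial derivative with respect to the variable `v`, as a `ℂ`-linear endomorphism
of the polynomial ring. -/
noncomputable def derOp {σ : Type*} (v : σ) :
    Module.End ℂ (MvPolynomial σ ℂ) :=
  (pderiv v).toLinearMap

/-- The variable `y^α_r` of the Fock space `MvPolynomial (Fin d × (Fin p ⊕ Fin m)) ℂ`,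
with superscript index `α` (0-based, a natural number) and subscript `r : Fin p`. -/
def yvar (d p m : ℕ) (α : ℕ) (h : α < d) (r : Fin p) : Fin d × (Fin p ⊕ Fin m) :=
  (⟨α, h⟩, Sum.inl r)

/-- The variable `x^α_i`, with superscript index `α` (0-based) and subscript `i : Fin m`. -/
def xvar (d p m : ℕ) (α : ℕ) (h : α < d) (i : Fin m) : Fin d × (Fin p ⊕ Fin m) :=
  (⟨α, h⟩, Sum.inr i)

/-- `F_a(r,s;k) = -Σ_{α=D+1}^{D+ξ-k} ∂_{y^{α+k}_r} ∘ y^α_s`, where `D = d_a`, `ξ = ξ_a`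
(the superscripts are written 0-based, so `α` runs over `D, D+1, …, D+ξ-k-1`). -/
noncomputable def Fop (d p m : ℕ) (D ξ : ℕ) (r s : Fin p) (k : ℕ) :
    Module.End ℂ (MvPolynomial (Fin d × (Fin p ⊕ Fin m)) ℂ) :=
  - ∑ α ∈ Finset.range (ξ - k),
      if h : D + α + k < d then
        derOp (yvar d p m (D + α + k) h r) * mulOp (yvar d p m (D + α) (by omega) s)
      else 0

/-- `H_a(r,j;k) = Σ_{α=D+1}^{D+ξ-k} ∂_{y^{α+k}_r} ∘ ∂_{x^α_j}`, where `D = d_a`,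
`ξ = ξ_a`. -/
noncomputable def Hop (d p m : ℕ) (D ξ : ℕ) (r : Fin p) (j : Fin m) (k : ℕ) :
    Module.End ℂ (MvPolynomial (Fin d × (Fin p ⊕ Fin m)) ℂ) :=
  ∑ α ∈ Finset.range (ξ - k),
      if h : D + α + k < d then
        derOp (yvar d p m (D + α + k) h r) * derOp (xvar d p m (D + α) (by omega) j)
      else 0

/-- `K_a(i,s;k) = -Σ_{α=D+1}^{D+ξ-k} x^{α+k}_i ∘ y^α_s`, where `D = d_a`, `ξ = ξ_a`. -/
noncomputable def Kop (d p m : ℕ) (D ξ : ℕ) (i : Fin m) (s : Fin p) (k : ℕ) :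
    Module.End ℂ (MvPolynomial (Fin d × (Fin p ⊕ Fin m)) ℂ) :=
  - ∑ α ∈ Finset.range (ξ - k),
      if h : D + α + k < d then
        mulOp (xvar d p m (D + α + k) h i) * mulOp (yvar d p m (D + α) (by omega) s)
      else 0

/-- `G_a(i,j;k) = Σ_{α=D+1}^{D+ξ-k} x^{α+k}_i ∘ ∂_{x^α_j}`, where `D = d_a`, `ξ = ξ_a`. -/
noncomputable def Gop (d p m : ℕ) (D ξ : ℕ) (i j : Fin m) (k : ℕ) :
    Module.End ℂ (MvPolynomial (Fin d × (Fin p ⊕ Fin m)) ℂ) :=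
  ∑ α ∈ Finset.range (ξ - k),
      if h : D + α + k < d then
        mulOp (xvar d p m (D + α + k) h i) * derOp (xvar d p m (D + α) (by omega) j)
      else 0


theorem der_mul_comm {σ : Type*} [DecidableEq σ] (v w : σ) :
    derOp v * mulOp w = mulOp w * derOp v + if w = v then 1 else 0 := by
  apply LinearMap.ext; intro f
  simp only [derOp, mulOp, Module.End.mul_apply, LinearMap.add_apply, LinearMap.mulLeft_apply,
    LinearMap.coe_mk, Derivation.coeFn_coe]
  rw [pderiv_mul, pderiv_X]
  split <;> rename_i h <;> simp [Pi.single_apply, h, add_comm]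

/-- totalized operators -/
noncomputable def mY (d p m : ℕ) (n : ℕ) (r : Fin p) :
    Module.End ℂ (MvPolynomial (Fin d × (Fin p ⊕ Fin m)) ℂ) :=
  if h : n < d then mulOp (yvar d p m n h r) else 0
noncomputable def mX (d p m : ℕ) (n : ℕ) (i : Fin m) :
    Module.End ℂ (MvPolynomial (Fin d × (Fin p ⊕ Fin m)) ℂ) :=
  if h : n < d then mulOp (xvar d p m n h i) else 0
noncomputable def dY (d p m : ℕ) (n : ℕ) (r : Fin p) :
    Module.End ℂ (MvPolynomial (Fin d × (Fin p ⊕ Fin m)) ℂ) :=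
  if h : n < d then derOp (yvar d p m n h r) else 0
noncomputable def dX (d p m : ℕ) (n : ℕ) (i : Fin m) :
    Module.End ℂ (MvPolynomial (Fin d × (Fin p ⊕ Fin m)) ℂ) :=
  if h : n < d then derOp (xvar d p m n h i) else 0

theorem dY_mY_comm (d p m : ℕ) (n n' : ℕ) (r s : Fin p) :
    dY d p m n r * mY d p m n' s
      = mY d p m n' s * dY d p m n r + if n = n' ∧ n < d ∧ r = s then 1 else 0 := by
  unfold dY mY
  by_cases hn : n < d
  · by_cases hn' : n' < d
    · rw [dif_pos hn, dif_pos hn', der_mul_comm]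
      congr 1
      have : (yvar d p m n' hn' s = yvar d p m n hn r) ↔ (n = n' ∧ n < d ∧ r = s) := by
        simp only [yvar, Prod.mk.injEq, Sum.inl.injEq, Fin.mk.injEq]
        constructor
        · rintro ⟨h1, h2⟩; exact ⟨h1.symm, hn, h2.symm⟩
        · rintro ⟨h1, _, h2⟩; exact ⟨h1.symm, h2.symm⟩
      rw [if_congr this rfl rfl]
    · rw [dif_pos hn, dif_neg hn', mul_zero, zero_mul,
        if_neg (by rintro ⟨h1, h2, -⟩; exact hn' (h1 ▸ h2)), add_zero]
  · rw [dif_neg hn, zero_mul, mul_zero,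
      if_neg (by rintro ⟨-, h2, -⟩; exact hn h2), add_zero]

theorem dX_mX_comm (d p m : ℕ) (n n' : ℕ) (j i : Fin m) :
    dX d p m n j * mX d p m n' i
      = mX d p m n' i * dX d p m n j + if n = n' ∧ n < d ∧ j = i then 1 else 0 := by
  unfold dX mX
  by_cases hn : n < d
  · by_cases hn' : n' < d
    · rw [dif_pos hn, dif_pos hn', der_mul_comm]
      congr 1
      have : (xvar d p m n' hn' i = xvar d p m n hn j) ↔ (n = n' ∧ n < d ∧ j = i) := by
        simp only [xvar, Prod.mk.injEq, Sum.inr.injEq, Fin.mk.injEq]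
        constructor
        · rintro ⟨h1, h2⟩; exact ⟨h1.symm, hn, h2.symm⟩
        · rintro ⟨h1, _, h2⟩; exact ⟨h1.symm, h2.symm⟩
      rw [if_congr this rfl rfl]
    · rw [dif_pos hn, dif_neg hn', mul_zero, zero_mul,
        if_neg (by rintro ⟨h1, h2, -⟩; exact hn' (h1 ▸ h2)), add_zero]
  · rw [dif_neg hn, zero_mul, mul_zero,
      if_neg (by rintro ⟨-, h2, -⟩; exact hn h2), add_zero]

theorem dY_mX_comm (d p m : ℕ) (n n' : ℕ) (r : Fin p) (i : Fin m) :
    dY d p m n r * mX d p m n' i = mX d p m n' i * dY d p m n r := by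
  unfold dY mX
  by_cases hn : n < d
  · by_cases hn' : n' < d
    · rw [dif_pos hn, dif_pos hn', der_mul_comm,
        if_neg (by simp [xvar, yvar]), add_zero]
    · rw [dif_neg hn', mul_zero, zero_mul]
  · rw [dif_neg hn, zero_mul, mul_zero]

theorem dX_mY_comm (d p m : ℕ) (n n' : ℕ) (j : Fin m) (s : Fin p) :
    dX d p m n j * mY d p m n' s = mY d p m n' s * dX d p m n j := by
  unfold dX mY
  by_cases hn : n < d
  · by_cases hn' : n' < d
    · rw [dif_pos hn, dif_pos hn', der_mul_comm,
        if_neg (by simp [xvar, yvar]), add_zero]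
    · rw [dif_neg hn', mul_zero, zero_mul]
  · rw [dif_neg hn, zero_mul, mul_zero]



theorem my_ite_central {R : Type*} [Ring R] (P : Prop) [Decidable P] (x : R) :
    (if P then (1:R) else 0) * x = x * (if P then 1 else 0) := by
  split <;> simp

theorem my_ite_mul_ite {R : Type*} [Ring R] (P Q : Prop) [Decidable P] [Decidable Q] :
    (if P then (1:R) else 0) * (if Q then 1 else 0) = if P ∧ Q then 1 else 0 := by
  split_ifs <;> simp_all

theorem comm4 {R : Type*} [Ring R] {A B C E c1 c2 : R}
    (hBC : B * C = C * B + c1) (hAE : A * E = E * A + c2)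
    (hAC : A * C = C * A) (hBE : B * E = E * B)
    (hc1 : ∀ x : R, c1 * x = x * c1) (hc2 : ∀ x : R, c2 * x = x * c2) :
    A * B * (C * E) - C * E * (A * B) = c2 * (C * B) + c1 * (E * A) + c1 * c2 := by
  have h1 : A * B * (C * E) = C * E * (A * B) + (c2 * (C * B) + c1 * (E * A) + c1 * c2) := by
    calc A * B * (C * E) = A * (B * C) * E := by noncomm_ring
    _ = A * (C * B) * E + A * c1 * E := by rw [hBC]; noncomm_ring
    _ = (A * C) * (B * E) + c1 * (A * E) := by rw [← hc1 A]; noncomm_ring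
    _ = (C * A) * (E * B) + c1 * (E * A + c2) := by rw [hAC, hBE, hAE]
    _ = C * (A * E) * B + c1 * (E * A) + c1 * c2 := by noncomm_ring
    _ = C * (E * A + c2) * B + c1 * (E * A) + c1 * c2 := by rw [hAE]
    _ = C * E * (A * B) + (c2 * (C * B) + c1 * (E * A) + c1 * c2) := by
        rw [mul_add, add_mul, ← hc2 C]; noncomm_ring
  rw [h1]; abel

theorem sum_ite_range {M : Type*} [AddCommMonoid M] (N K : ℕ) (hKN : K ≤ N) (f : ℕ → M) :
    (∑ α ∈ Finset.range N, if α < K then f α else 0) = ∑ α ∈ Finset.range K, f α := by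
  rw [← Finset.sum_filter]
  congr 1
  ext α
  simp only [Finset.mem_filter, Finset.mem_range]
  omega

theorem Hop_eq (d p m : ℕ) (Dv ξv : ℕ) (r : Fin p) (j : Fin m) (k : ℕ) :
    Hop d p m Dv ξv r j k
      = ∑ α ∈ Finset.range (ξv - k), dY d p m (Dv + α + k) r * dX d p m (Dv + α) j := by
  unfold Hop
  refine Finset.sum_congr rfl fun α _ => ?_
  by_cases h : Dv + α + k < d
  · rw [dif_pos h]; unfold dY dX
    rw [dif_pos h, dif_pos (by omega : Dv + α < d)]
  · rw [dif_neg h]; unfold dY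
    rw [dif_neg h, zero_mul]

theorem Kop_eq (d p m : ℕ) (Dv ξv : ℕ) (i : Fin m) (s : Fin p) (l : ℕ) :
    Kop d p m Dv ξv i s l
      = -∑ β ∈ Finset.range (ξv - l), mX d p m (Dv + β + l) i * mY d p m (Dv + β) s := by
  unfold Kop
  congr 1
  refine Finset.sum_congr rfl fun β _ => ?_
  by_cases h : Dv + β + l < d
  · rw [dif_pos h]; unfold mX mY
    rw [dif_pos h, dif_pos (by omega : Dv + β < d)]
  · rw [dif_neg h]; unfold mX
    rw [dif_neg h, zero_mul]

theorem Fop_eq (d p m : ℕ) (Dv ξv : ℕ) (r s : Fin p) (k : ℕ) :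
    Fop d p m Dv ξv r s k
      = -∑ α ∈ Finset.range (ξv - k), dY d p m (Dv + α + k) r * mY d p m (Dv + α) s := by
  unfold Fop
  congr 1
  refine Finset.sum_congr rfl fun α _ => ?_
  by_cases h : Dv + α + k < d
  · rw [dif_pos h]; unfold dY mY
    rw [dif_pos h, dif_pos (by omega : Dv + α < d)]
  · rw [dif_neg h]; unfold dY
    rw [dif_neg h, zero_mul]

theorem Gop_eq (d p m : ℕ) (Dv ξv : ℕ) (i j : Fin m) (k : ℕ) :
    Gop d p m Dv ξv i j k
      = ∑ α ∈ Finset.range (ξv - k), mX d p m (Dv + α + k) i * dX d p m (Dv + α) j := by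
  unfold Gop
  refine Finset.sum_congr rfl fun α _ => ?_
  by_cases h : Dv + α + k < d
  · rw [dif_pos h]; unfold mX dX
    rw [dif_pos h, dif_pos (by omega : Dv + α < d)]
  · rw [dif_neg h]; unfold mX
    rw [dif_neg h, zero_mul]

set_option maxHeartbeats 1000000 in
theorem main_block (d p m : ℕ) (Dv ξv : ℕ) (hb : Dv + ξv ≤ d)
    (r s : Fin p) (i j : Fin m) (k l : ℕ) :
    Hop d p m Dv ξv r j k * Kop d p m Dv ξv i s l
      - Kop d p m Dv ξv i s l * Hop d p m Dv ξv r j k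
    = (if i = j then Fop d p m Dv ξv r s (k + l) else 0)
        - (if r = s then Gop d p m Dv ξv i j (k + l) else 0) := by
  have step1 : Hop d p m Dv ξv r j k * Kop d p m Dv ξv i s l
      - Kop d p m Dv ξv i s l * Hop d p m Dv ξv r j k
      = -(∑ α ∈ Finset.range (ξv - k), ∑ β ∈ Finset.range (ξv - l),
          ((dY d p m (Dv + α + k) r * dX d p m (Dv + α) j)
              * (mX d p m (Dv + β + l) i * mY d p m (Dv + β) s)
            - (mX d p m (Dv + β + l) i * mY d p m (Dv + β) s)
              * (dY d p m (Dv + α + k) r * dX d p m (Dv + α) j))) := by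
    rw [Hop_eq, Kop_eq]
    rw [show ∀ X Y : Module.End ℂ (MvPolynomial (Fin d × (Fin p ⊕ Fin m)) ℂ),
        X * (-Y) - (-Y) * X = -(X * Y - Y * X) from fun X Y => by
          rw [mul_neg X Y, neg_mul Y X]; abel]
    rw [Finset.sum_mul_sum, Finset.sum_mul_sum]
    rw [show (∑ β ∈ Finset.range (ξv - l), ∑ α ∈ Finset.range (ξv - k),
          (mX d p m (Dv + β + l) i * mY d p m (Dv + β) s)
            * (dY d p m (Dv + α + k) r * dX d p m (Dv + α) j))
        = ∑ α ∈ Finset.range (ξv - k), ∑ β ∈ Finset.range (ξv - l),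
          (mX d p m (Dv + β + l) i * mY d p m (Dv + β) s)
            * (dY d p m (Dv + α + k) r * dX d p m (Dv + α) j) from Finset.sum_comm]
    rw [← Finset.sum_sub_distrib]
    congr 1
    exact Finset.sum_congr rfl fun α _ => (Finset.sum_sub_distrib _ _).symm
  have step2 : ∀ α ∈ Finset.range (ξv - k), ∀ β ∈ Finset.range (ξv - l),
      (dY d p m (Dv + α + k) r * dX d p m (Dv + α) j)
          * (mX d p m (Dv + β + l) i * mY d p m (Dv + β) s)
        - (mX d p m (Dv + β + l) i * mY d p m (Dv + β) s)
          * (dY d p m (Dv + α + k) r * dX d p m (Dv + α) j)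
      = (if β = α + k ∧ r = s then (1 : Module.End ℂ (MvPolynomial (Fin d × (Fin p ⊕ Fin m)) ℂ)) else 0)
            * (mX d p m (Dv + β + l) i * dX d p m (Dv + α) j)
        + (if α = β + l ∧ j = i then 1 else 0)
            * (mY d p m (Dv + β) s * dY d p m (Dv + α + k) r)
        + (if α = β + l ∧ j = i then 1 else 0) * (if β = α + k ∧ r = s then 1 else 0) := by
    intro α hα β hβ
    simp only [Finset.mem_range] at hα hβ
    have h1 := dX_mX_comm d p m (Dv + α) (Dv + β + l) j i
    have h2 := dY_mY_comm d p m (Dv + α + k) (Dv + β) r s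
    rw [if_congr (show (Dv + α = Dv + β + l ∧ Dv + α < d ∧ j = i) ↔ (α = β + l ∧ j = i) from
      ⟨fun ⟨u, _, w⟩ => ⟨by omega, w⟩, fun ⟨u, w⟩ => ⟨by omega, by omega, w⟩⟩) rfl rfl] at h1
    rw [if_congr (show (Dv + α + k = Dv + β ∧ Dv + α + k < d ∧ r = s) ↔ (β = α + k ∧ r = s) from
      ⟨fun ⟨u, _, w⟩ => ⟨by omega, w⟩, fun ⟨u, w⟩ => ⟨by omega, by omega, w⟩⟩) rfl rfl] at h2
    have := comm4 h1 h2 (dY_mX_comm d p m (Dv + α + k) (Dv + β + l) r i)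
      (dX_mY_comm d p m (Dv + α) (Dv + β) j s)
      (my_ite_central _) (my_ite_central _)
    rw [this]
  rw [step1, Finset.sum_congr rfl (fun α hα => Finset.sum_congr rfl (step2 α hα))]
  simp only [Finset.sum_add_distrib]
  -- Now evaluate the three double sums
  have E1val : (∑ α ∈ Finset.range (ξv - k), ∑ β ∈ Finset.range (ξv - l),
      (if β = α + k ∧ r = s then (1 : Module.End ℂ (MvPolynomial (Fin d × (Fin p ⊕ Fin m)) ℂ)) else 0)
        * (mX d p m (Dv + β + l) i * dX d p m (Dv + α) j))
      = if r = s then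
          ∑ α ∈ Finset.range (ξv - (k + l)), mX d p m (Dv + α + (k + l)) i * dX d p m (Dv + α) j
        else 0 := by
    by_cases hrs : r = s
    · rw [if_pos hrs]
      simp only [hrs, and_true, ite_mul, one_mul, zero_mul]
      have inner : ∀ α, (∑ β ∈ Finset.range (ξv - l),
          if β = α + k then mX d p m (Dv + β + l) i * dX d p m (Dv + α) j else 0)
          = if α < ξv - (k + l) then mX d p m (Dv + α + (k + l)) i * dX d p m (Dv + α) j else 0 := by
        intro α
        rw [Finset.sum_ite_eq' (Finset.range (ξv - l)) (α + k)
          (fun β => mX d p m (Dv + β + l) i * dX d p m (Dv + α) j)]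
        rw [show Dv + (α + k) + l = Dv + α + (k + l) from by omega]
        exact if_congr (by rw [Finset.mem_range]; omega) rfl rfl
      rw [Finset.sum_congr rfl fun α _ => inner α]
      exact sum_ite_range _ _ (by omega) _
    · rw [if_neg hrs]
      simp [hrs]
  have E2val : (∑ α ∈ Finset.range (ξv - k), ∑ β ∈ Finset.range (ξv - l),
      (if α = β + l ∧ j = i then (1 : Module.End ℂ (MvPolynomial (Fin d × (Fin p ⊕ Fin m)) ℂ)) else 0)
        * (mY d p m (Dv + β) s * dY d p m (Dv + α + k) r))
      = if i = j then
          ∑ β ∈ Finset.range (ξv - (k + l)), mY d p m (Dv + β) s * dY d p m (Dv + β + (k + l)) r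
        else 0 := by
    rw [Finset.sum_comm]
    by_cases hij : i = j
    · rw [if_pos hij]
      simp only [hij.symm, eq_self_iff_true, and_true, ite_mul, one_mul, zero_mul]
      have inner : ∀ β, (∑ α ∈ Finset.range (ξv - k),
          if α = β + l then mY d p m (Dv + β) s * dY d p m (Dv + α + k) r else 0)
          = if β < ξv - (k + l) then mY d p m (Dv + β) s * dY d p m (Dv + β + (k + l)) r else 0 := by
        intro β
        rw [Finset.sum_ite_eq' (Finset.range (ξv - k)) (β + l)
          (fun α => mY d p m (Dv + β) s * dY d p m (Dv + α + k) r)]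
        rw [show Dv + (β + l) + k = Dv + β + (k + l) from by omega]
        exact if_congr (by rw [Finset.mem_range]; omega) rfl rfl
      rw [Finset.sum_congr rfl fun β _ => inner β]
      exact sum_ite_range _ _ (by omega) _
    · rw [if_neg hij]
      have : j ≠ i := fun h => hij h.symm
      simp [this]
  have E3val : (∑ α ∈ Finset.range (ξv - k), ∑ β ∈ Finset.range (ξv - l),
      (if α = β + l ∧ j = i then (1 : Module.End ℂ (MvPolynomial (Fin d × (Fin p ⊕ Fin m)) ℂ)) else 0)
        * (if β = α + k ∧ r = s then 1 else 0))
      = if k = 0 ∧ l = 0 ∧ r = s ∧ j = i then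
          (ξv : ℕ) • (1 : Module.End ℂ (MvPolynomial (Fin d × (Fin p ⊕ Fin m)) ℂ)) else 0 := by
    simp only [my_ite_mul_ite]
    by_cases hP : k = 0 ∧ l = 0 ∧ r = s ∧ j = i
    · obtain ⟨hk, hl, hrs, hji⟩ := hP
      subst hk; subst hl
      rw [if_pos ⟨rfl, rfl, hrs, hji⟩]
      simp only [Nat.add_zero, Nat.sub_zero, hrs, hji, and_true]
      have hcond : ∀ α β : ℕ, ((α = β ∧ β = α)) ↔ β = α :=
        fun α β => ⟨fun h => h.2, fun h => ⟨h.symm, h⟩⟩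
      simp only [hcond]
      rw [Finset.sum_congr rfl fun α hα => Finset.sum_ite_eq' (Finset.range ξv) α (fun _ => (1 : Module.End ℂ (MvPolynomial (Fin d × (Fin p ⊕ Fin m)) ℂ)))]
      rw [Finset.sum_congr rfl fun α hα => if_pos hα]
      rw [Finset.sum_const, Finset.card_range]
    · rw [if_neg hP]
      apply Finset.sum_eq_zero; intro α hα
      apply Finset.sum_eq_zero; intro β hβ
      rw [if_neg]
      rintro ⟨⟨h1, h2⟩, h3, h4⟩
      exact hP ⟨by omega, by omega, h4, h2⟩
  rw [E1val, E2val, E3val]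
  have Fval : Fop d p m Dv ξv r s (k + l)
      = -((∑ β ∈ Finset.range (ξv - (k + l)), mY d p m (Dv + β) s * dY d p m (Dv + β + (k + l)) r)
          + (if k + l = 0 ∧ r = s then (ξv : ℕ) • (1 : Module.End ℂ (MvPolynomial (Fin d × (Fin p ⊕ Fin m)) ℂ)) else 0)) := by
    rw [Fop_eq]
    have hterm : ∀ γ ∈ Finset.range (ξv - (k + l)),
        dY d p m (Dv + γ + (k + l)) r * mY d p m (Dv + γ) s
        = mY d p m (Dv + γ) s * dY d p m (Dv + γ + (k + l)) r
          + (if k + l = 0 ∧ r = s then 1 else 0) := by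
      intro γ hγ
      rw [Finset.mem_range] at hγ
      rw [dY_mY_comm]
      congr 1
      exact if_congr ⟨fun ⟨h1, _, h3⟩ => ⟨by omega, h3⟩,
        fun ⟨h1, h2⟩ => ⟨by omega, by omega, h2⟩⟩ rfl rfl
    rw [Finset.sum_congr rfl hterm, Finset.sum_add_distrib, Finset.sum_const, Finset.card_range]
    congr 2
    split_ifs with h
    · rw [show ξv - (k + l) = ξv from by omega]
    · rw [smul_zero]
  rw [Gop_eq, Fval]
  by_cases hrs : r = s <;> by_cases hij : i = j
  · have hC : (k = 0 ∧ l = 0 ∧ r = s ∧ j = i) = (k + l = 0 ∧ r = s) :=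
      propext ⟨fun ⟨h1, h2, h3, _⟩ => ⟨by omega, h3⟩,
        fun ⟨h1, h2⟩ => ⟨by omega, by omega, h2, hij.symm⟩⟩
    simp only [hC, if_pos hrs, if_pos hij]
    abel
  · have hC : (k = 0 ∧ l = 0 ∧ r = s ∧ j = i) = False :=
      eq_false (fun h => hij h.2.2.2.symm)
    simp only [hC, if_pos hrs, if_neg hij, if_false]
    abel
  · have hC : (k = 0 ∧ l = 0 ∧ r = s ∧ j = i) = False := eq_false (fun h => hrs h.2.2.1)
    have hC2 : (k + l = 0 ∧ r = s) = False := eq_false (fun h => hrs h.2)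
    simp only [hC, hC2, if_pos hij, if_neg hrs, if_false]
    abel
  · have hC : (k = 0 ∧ l = 0 ∧ r = s ∧ j = i) = False := eq_false (fun h => hrs h.2.2.1)
    simp only [hC, if_neg hrs, if_neg hij, if_false]
    abel

set_option maxHeartbeats 1000000 in
/-- Identity (ovphi-e2):
`⁅H_a(r,j;k), K_b(i,s;l)⁆ = δ_{ab} (δ_{ij} F_a(r,s;k+l) - δ_{rs} G_a(i,j;k+l))`. -/
theorem stmt11 (p m : ℕ) (hpm : 1 ≤ p + m) (d' : ℕ) (hd' : 1 ≤ d')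
    (ξ : Fin d' → ℕ) (hξ : ∀ a, 0 < ξ a) (d : ℕ) (hd : d = ∑ a, ξ a)
    (D : Fin d' → ℕ)
    (hD : ∀ a, D a = ∑ b ∈ Finset.univ.filter (fun b => b < a), ξ b)
    (a b : Fin d') (r s : Fin p) (i j : Fin m) (k l : ℕ) :
    Hop d p m (D a) (ξ a) r j k * Kop d p m (D b) (ξ b) i s l
      - Kop d p m (D b) (ξ b) i s l * Hop d p m (D a) (ξ a) r j k
    = if a = b then
        (if i = j then Fop d p m (D a) (ξ a) r s (k + l) else 0)
          - (if r = s then Gop d p m (D a) (ξ a) i j (k + l) else 0)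
      else 0 := by
  have hDd : ∀ c : Fin d', D c + ξ c ≤ d := by
    intro c
    rw [hd, hD c]
    have hins : c ∉ Finset.univ.filter (fun b => b < c) := by simp
    calc (∑ b ∈ Finset.univ.filter (fun b => b < c), ξ b) + ξ c
        = ∑ b ∈ insert c (Finset.univ.filter (fun b => b < c)), ξ b := by
          rw [Finset.sum_insert hins, add_comm]
      _ ≤ ∑ b, ξ b := Finset.sum_le_sum_of_subset (Finset.subset_univ _)
  by_cases hab : a = b
  · subst hab
    rw [if_pos rfl]
    exact main_block d p m (D a) (ξ a) (hDd a) r s i j k l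
  · rw [if_neg hab]
    have hmono : ∀ a' b' : Fin d', a' < b' → D a' + ξ a' ≤ D b' := by
      intro a' b' h'
      rw [hD a', hD b']
      have hins : a' ∉ Finset.univ.filter (fun c => c < a') := by simp
      have hsub : insert a' (Finset.univ.filter (fun c => c < a'))
          ⊆ Finset.univ.filter (fun c => c < b') := by
        intro x hx
        simp only [Finset.mem_insert, Finset.mem_filter, Finset.mem_univ, true_and] at hx ⊢
        rcases hx with rfl | hx
        · exact h'
        · exact hx.trans h'
      calc (∑ c ∈ Finset.univ.filter (fun c => c < a'), ξ c) + ξ a'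
          = ∑ c ∈ insert a' (Finset.univ.filter (fun c => c < a')), ξ c := by
            rw [Finset.sum_insert hins, add_comm]
        _ ≤ ∑ c ∈ Finset.univ.filter (fun c => c < b'), ξ c :=
            Finset.sum_le_sum_of_subset hsub
    have hne : ∀ n n' : ℕ, n < ξ a → n' < ξ b → D a + n ≠ D b + n' := by
      intro n n' h1 h2 heq
      rcases lt_or_gt_of_ne hab with h | h
      · have := hmono a b h; omega
      · have := hmono b a h; omega
    rw [Hop_eq, Kop_eq]
    have hcomm : ∀ α ∈ Finset.range (ξ a - k), ∀ β ∈ Finset.range (ξ b - l),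
        Commute (dY d p m (D a + α + k) r * dX d p m (D a + α) j)
          (mX d p m (D b + β + l) i * mY d p m (D b + β) s) := by
      intro α hα β hβ
      simp only [Finset.mem_range] at hα hβ
      have h1 : Commute (dY d p m (D a + α + k) r) (mX d p m (D b + β + l) i) :=
        dY_mX_comm d p m (D a + α + k) (D b + β + l) r i
      have h2 : Commute (dY d p m (D a + α + k) r) (mY d p m (D b + β) s) := by
        have := dY_mY_comm d p m (D a + α + k) (D b + β) r s
        rw [if_neg, add_zero] at this
        · exact this
        · rintro ⟨h', -, -⟩
          exact hne (α + k) β (by omega) (by omega) (by omega)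
      have h3 : Commute (dX d p m (D a + α) j) (mX d p m (D b + β + l) i) := by
        have := dX_mX_comm d p m (D a + α) (D b + β + l) j i
        rw [if_neg, add_zero] at this
        · exact this
        · rintro ⟨h', -, -⟩
          exact hne α (β + l) (by omega) (by omega) (by omega)
      have h4 : Commute (dX d p m (D a + α) j) (mY d p m (D b + β) s) :=
        dX_mY_comm d p m (D a + α) (D b + β) j s
      exact Commute.mul_left (h1.mul_right h2) (h3.mul_right h4)
    have hc : Commute
        (∑ α ∈ Finset.range (ξ a - k), dY d p m (D a + α + k) r * dX d p m (D a + α) j)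
        (∑ β ∈ Finset.range (ξ b - l), mX d p m (D b + β + l) i * mY d p m (D b + β) s) := by
      apply Commute.sum_left
      intro α hα
      apply Commute.sum_right
      intro β hβ
      exact hcomm α hα β hβ
    set T := ∑ α ∈ Finset.range (ξ a - k), dY d p m (D a + α + k) r * dX d p m (D a + α) j
      with hT
    set S := ∑ β ∈ Finset.range (ξ b - l), mX d p m (D b + β + l) i * mY d p m (D b + β) s
      with hS
    rw [mul_neg T S, neg_mul S T, hc.eq]
    abel
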